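/- arXiv:0910.1390 — 4 statements merged into one kernel-verified Lean document; each statement's English description precedes it below -/
import Mathlib

section
/- Let (X, μ) be a probability measure space and f : X → ℝ a bounded measurable function. If there exists a constant C₁ ≥ 0 such that exp(-inf f) ≤ exp(C₁) · ∫ exp(-f) dμ, then the set {x : f(x) ≤ inf f + C₁ + 1} has measure at least exp(-C₁)/4. -/
open MeasureTheory Real

/-- Lemma 3.2 of Tosatti–Weinkove: if `exp(-essInf f) ≤ exp C₁ · ∫ exp (-f) dμ` on a
probability space, then the sublevel set `{f ≤ essInf f + C₁ + 1}` has measure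
at least `exp (-C₁) / 4`. -/
theorem sublevel_measure_lower_bound
    {X : Type*} [MeasurableSpace X] (μ : Measure X) [IsProbabilityMeasure μ]
    (f : X → ℝ) (hf : Measurable f) (hbd : ∃ M : ℝ, ∀ x, |f x| ≤ M)
    (C₁ : ℝ) (hC₁ : 0 ≤ C₁)
    (h : Real.exp (-(essInf f μ)) ≤ Real.exp C₁ * ∫ x, Real.exp (-(f x)) ∂μ) :
    ENNReal.ofReal (Real.exp (-C₁) / 4) ≤ μ {x | f x ≤ essInf f μ + C₁ + 1} := by
  obtain ⟨M, hM⟩ := hbd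
  set m := essInf f μ with hm
  set S : Set X := {x | f x ≤ m + C₁ + 1} with hS
  have hSmeas : MeasurableSet S := hf measurableSet_Iic
  -- a.e. lower bound by essInf
  have hbd' : Filter.IsBoundedUnder (· ≥ ·) (ae μ) f :=
    ⟨-M, Filter.eventually_map.2 (Filter.Eventually.of_forall fun x => (abs_le.1 (hM x)).1)⟩
  have hae : ∀ᵐ x ∂μ, m ≤ f x := ae_essInf_le hbd'
  -- integrability
  have hint : Integrable (fun x => Real.exp (-(f x))) μ := by
    refine ⟨(hf.neg.exp).aestronglyMeasurable, ?_⟩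
    apply HasFiniteIntegral.of_bounded (C := Real.exp M)
    filter_upwards with x
    simp only [norm_eq_abs, abs_of_pos (exp_pos _)]
    exact exp_le_exp.2 (by linarith [(abs_le.1 (hM x)).1])
  -- split the integral
  have hsplit : ∫ x, Real.exp (-(f x)) ∂μ
      = (∫ x in S, Real.exp (-(f x)) ∂μ) + ∫ x in Sᶜ, Real.exp (-(f x)) ∂μ :=
    (integral_add_compl hSmeas hint).symm
  have hμS : μ S ≠ ⊤ := measure_ne_top _ _
  have hμSc : μ Sᶜ ≠ ⊤ := measure_ne_top _ _
  -- bound on S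
  have h1 : ∫ x in S, Real.exp (-(f x)) ∂μ ≤ Real.exp (-m) * (μ S).toReal := by
    have := setIntegral_mono_ae_restrict hint.integrableOn
      (integrableOn_const (C := Real.exp (-m)) hμS)
      (ae_restrict_of_ae (hae.mono fun x hx => by
        show Real.exp (-(f x)) ≤ Real.exp (-m)
        exact exp_le_exp.2 (by linarith)))
    rw [setIntegral_const, smul_eq_mul, Measure.real] at this
    linarith
  -- bound on Sᶜ
  have h2 : ∫ x in Sᶜ, Real.exp (-(f x)) ∂μ ≤ Real.exp (-(m + C₁ + 1)) := by
    have hb : ∀ x ∈ Sᶜ, Real.exp (-(f x)) ≤ Real.exp (-(m + C₁ + 1)) := by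
      intro x hx
      have : m + C₁ + 1 < f x := lt_of_not_ge hx
      exact exp_le_exp.2 (by linarith)
    calc ∫ x in Sᶜ, Real.exp (-(f x)) ∂μ
        ≤ ∫ _ in Sᶜ, Real.exp (-(m + C₁ + 1)) ∂μ :=
          setIntegral_mono_on hint.integrableOn
            (integrableOn_const hμSc) hSmeas.compl hb
      _ = (μ Sᶜ).toReal * Real.exp (-(m + C₁ + 1)) := by
          simp [setIntegral_const, smul_eq_mul, Measure.real]
      _ ≤ 1 * Real.exp (-(m + C₁ + 1)) := by
          gcongr
          exact ENNReal.toReal_le_of_le_ofReal zero_le_one (by simp [prob_le_one])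
      _ = Real.exp (-(m + C₁ + 1)) := one_mul _
  -- combine
  have key : Real.exp (-m) ≤ Real.exp C₁ * (Real.exp (-m) * (μ S).toReal
      + Real.exp (-(m + C₁ + 1))) := by
    calc Real.exp (-m) ≤ Real.exp C₁ * ∫ x, Real.exp (-(f x)) ∂μ := h
      _ ≤ _ := by
          rw [hsplit]
          exact mul_le_mul_of_nonneg_left (add_le_add h1 h2) (exp_pos _).le
  have hexp : Real.exp (-(m + C₁ + 1)) = Real.exp (-m) * Real.exp (-C₁) * Real.exp (-1) := by
    rw [← Real.exp_add, ← Real.exp_add]; ring_nf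
  have hEC : Real.exp C₁ * Real.exp (-C₁) = 1 := by rw [← Real.exp_add]; simp
  have hpos : (0:ℝ) < Real.exp (-m) := exp_pos _
  -- derive 1 ≤ exp C₁ * toReal + exp (-1)
  have key2 : 1 ≤ Real.exp C₁ * (μ S).toReal + Real.exp (-1) := by
    have hk := key
    rw [hexp] at hk
    have heq : Real.exp C₁ * (Real.exp (-m) * (μ S).toReal
        + Real.exp (-m) * Real.exp (-C₁) * Real.exp (-1))
        = Real.exp (-m) * (Real.exp C₁ * (μ S).toReal)
          + (Real.exp C₁ * Real.exp (-C₁)) * (Real.exp (-m) * Real.exp (-1)) := by ring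
    rw [heq, hEC, one_mul, ← mul_add] at hk
    have := le_of_mul_le_mul_left (by linarith [hk] : Real.exp (-m) * 1
        ≤ Real.exp (-m) * (Real.exp C₁ * (μ S).toReal + Real.exp (-1))) hpos
    linarith
  have hfinal : Real.exp (-C₁) / 4 ≤ (μ S).toReal := by
    have h2e : (2:ℝ) ≤ Real.exp 1 := by nlinarith [add_one_le_exp (1:ℝ)]
    have he1 : Real.exp (-1 : ℝ) ≤ 3/4 := by
      rw [exp_neg]
      have : (Real.exp 1)⁻¹ ≤ (2:ℝ)⁻¹ := by gcongr
      linarith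
    have h3 : 1/4 ≤ Real.exp C₁ * (μ S).toReal := by linarith
    have h4 : Real.exp (-C₁) * (1/4) ≤ Real.exp (-C₁) * (Real.exp C₁ * (μ S).toReal) :=
      mul_le_mul_of_nonneg_left h3 (exp_pos _).le
    have h5 : Real.exp (-C₁) * (Real.exp C₁ * (μ S).toReal) = (μ S).toReal := by
      rw [← mul_assoc, mul_comm (Real.exp (-C₁)) (Real.exp C₁), hEC, one_mul]
    linarith
  exact ENNReal.ofReal_le_of_le_toReal hfinal
end

section
/- Let (X, μ) be a finite measure space and ψ : X → ℝ a nonnegative integrable function with ψ ∈ L² (μ). Suppose there exist constants δ > 0 and C ≥ 0 such that the set S = {ψ ≤ C} satisfies μ(S) ≥ δ, and a constant C' ≥ 0 such that ‖ψ - ψ̄‖_{L²} ≤ C' · ‖ψ‖_{L¹}^{1/2}, where ψ̄ = (∫ ψ dμ)/μ(X) is the average of ψ. Then there exists a constant C'' depending only on δ, C, C', and μ(X) such that ‖ψ‖_{L¹} ≤ C''. -/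
open MeasureTheory Real

/-- Combining a measure lower bound on a sublevel set with a Poincaré-type inequality
gives a bound on the `L¹` norm of a nonnegative function `ψ`, with constant depending
only on `δ`, `C`, `C'`, and the total measure `V`. -/
theorem L1_bound_from_sublevel_and_poincare
    (δ C C' V : ℝ) (hδ : 0 < δ) (hC : 0 ≤ C) (hC' : 0 ≤ C') (hV : 0 < V) :
    ∃ C'' : ℝ, ∀ (X : Type) (_ : MeasurableSpace X) (μ : Measure X),
      IsFiniteMeasure μ → (μ Set.univ).toReal = V →
      ∀ ψ : X → ℝ, (∀ x, 0 ≤ ψ x) → Integrable ψ μ → MemLp ψ 2 μ →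
      ENNReal.ofReal δ ≤ μ {x | ψ x ≤ C} →
      (∫ x, (ψ x - (∫ y, ψ y ∂μ) / V) ^ 2 ∂μ) ^ ((1 : ℝ) / 2)
        ≤ C' * (∫ x, ψ x ∂μ) ^ ((1 : ℝ) / 2) →
      ∫ x, ψ x ∂μ ≤ C'' := by
  refine ⟨3 * C * V + C' ^ 2 * V ^ 2 / δ, ?_⟩
  intro X _ μ hfin hVμ ψ hψ0 hint hL2 hS hP
  set I : ℝ := ∫ x, ψ x ∂μ with hI
  have hI0 : 0 ≤ I := integral_nonneg hψ0
  have hb : 0 ≤ C' ^ 2 * V ^ 2 / δ := by positivity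
  by_cases hc : I / V ≤ C
  · have : I ≤ C * V := by
      rw [div_le_iff₀ hV] at hc; nlinarith
    nlinarith
  push_neg at hc
  set c : ℝ := I / V with hcdef
  set m : ℝ := c - C with hm
  have hm0 : 0 < m := sub_pos.mpr hc
  -- measurable modification
  obtain ⟨φ, hφm, hφeq⟩ := hint.aestronglyMeasurable.aemeasurable
  set S : Set X := {x | φ x ≤ C} with hSdef
  have hSm : MeasurableSet S := hφm measurableSet_Iic
  have hSeq : μ {x | ψ x ≤ C} = μ S := by
    apply measure_congr
    filter_upwards [hφeq] with x hx
    exact propext (by change ψ x ≤ C ↔ φ x ≤ C; rw [hx])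
  have hSμ : ENNReal.ofReal δ ≤ μ S := hSeq ▸ hS
  have hSfin : μ S ≠ ⊤ := measure_ne_top μ S
  have hSreal : δ ≤ (μ S).toReal := by
    have := ENNReal.toReal_mono hSfin hSμ
    simpa [ENNReal.toReal_ofReal hδ.le] using this
  -- integrability of (ψ - c)^2
  have hL2' : MemLp (fun x => ψ x - c) 2 μ := hL2.sub (memLp_const c)
  have hintsq : Integrable (fun x => (ψ x - c) ^ 2) μ := by
    have := hL2'.integrable_sq
    simpa using this
  set A : ℝ := ∫ x, (ψ x - c) ^ 2 ∂μ with hA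
  have hA0 : 0 ≤ A := integral_nonneg fun x => sq_nonneg _
  -- lower bound : δ * m^2 ≤ A
  have hlow : δ * m ^ 2 ≤ A := by
    have h1 : ∫ x in S, (m : ℝ) ^ 2 ∂μ ≤ ∫ x in S, (ψ x - c) ^ 2 ∂μ := by
      apply setIntegral_mono_ae_restrict (integrable_const _).restrict hintsq.restrict
      have : ∀ᵐ x ∂μ.restrict S, ψ x = φ x := ae_restrict_of_ae hφeq
      filter_upwards [this, ae_restrict_mem hSm] with x hx hxS
      have hxC : ψ x ≤ C := by rw [hx]; exact hxS
      have : m ≤ c - ψ x := by simp [hm]; linarith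
      nlinarith [hm0.le]
    have h2 : ∫ x in S, (m : ℝ) ^ 2 ∂μ = (μ S).toReal * m ^ 2 := by
      simp [setIntegral_const, smul_eq_mul, measureReal_def]
    have h3 : ∫ x in S, (ψ x - c) ^ 2 ∂μ ≤ A := by
      apply setIntegral_le_integral hintsq
      filter_upwards with x using sq_nonneg _
    nlinarith [sq_nonneg m]
  -- upper bound : A ≤ C'^2 * I
  have hup : A ≤ C' ^ 2 * I := by
    have h1 : A ^ ((1:ℝ)/2) ≤ C' * I ^ ((1:ℝ)/2) := hP
    have h2 : (A ^ ((1:ℝ)/2)) ^ 2 ≤ (C' * I ^ ((1:ℝ)/2)) ^ 2 := by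
      apply pow_le_pow_left₀ (Real.rpow_nonneg hA0 _) h1
    have hA2 : (A ^ ((1:ℝ)/2)) ^ 2 = A := by
      rw [← Real.rpow_natCast (A ^ ((1:ℝ)/2)) 2, ← Real.rpow_mul hA0]
      norm_num
    have hI2 : (I ^ ((1:ℝ)/2)) ^ 2 = I := by
      rw [← Real.rpow_natCast (I ^ ((1:ℝ)/2)) 2, ← Real.rpow_mul hI0]
      norm_num
    calc A = (A ^ ((1:ℝ)/2)) ^ 2 := hA2.symm
      _ ≤ (C' * I ^ ((1:ℝ)/2)) ^ 2 := h2
      _ = C' ^ 2 * I := by rw [mul_pow, hI2]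
  -- combine
  have hkey : δ * (I / V - C) ^ 2 ≤ C' ^ 2 * I := le_trans (by simp [hm, hcdef]) (le_trans hlow hup)
  have hid : (I / V - C) * V = I - C * V := by field_simp
  have hkey' : δ * (I - C * V) ^ 2 ≤ C' ^ 2 * I * V ^ 2 := by
    have h := mul_le_mul_of_nonneg_right hkey (sq_nonneg V)
    calc δ * (I - C * V) ^ 2 = δ * ((I / V - C) * V) ^ 2 := by rw [hid]
      _ = δ * (I / V - C) ^ 2 * V ^ 2 := by ring
      _ ≤ C' ^ 2 * I * V ^ 2 := h
  have hbδ : δ * (C' ^ 2 * V ^ 2 / δ) = C' ^ 2 * V ^ 2 := by field_simp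
  have h2 : (I - C * V) ^ 2 ≤ (C' ^ 2 * V ^ 2 / δ) * I := by
    have : δ * (I - C * V) ^ 2 ≤ δ * ((C' ^ 2 * V ^ 2 / δ) * I) := by
      rw [← mul_assoc, hbδ]; linarith [hkey']
    exact le_of_mul_le_mul_left this hδ
  nlinarith [h2, mul_nonneg (mul_nonneg hC hV.le) hI0, sq_nonneg (C * V),
    mul_nonneg hC hV.le]
end

section
/- Let g be a bounded nonnegative measurable function on a finite measure space (X, μ), let β > 1 and p₀ > 0, and suppose ‖g‖_{L^{pβ}} ≤ C^{1/p} p^{1/p} ‖g‖_{L^p} for all p ≥ p₀, with C ≥ 1. Then ‖g‖_{L^∞} ≤ (∏_{k=0}^∞ (C β^k p₀)^{1/(β^k p₀)}) · ‖g‖_{L^{p₀}}, and the infinite product converges to a finite constant. -/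
open MeasureTheory Real

/-- Standard Moser iteration with the explicit constant: if
`‖g‖_{L^{pβ}} ≤ C^{1/p} p^{1/p} ‖g‖_{L^p}` for all `p ≥ p₀`, then
`‖g‖_{L^∞} ≤ ∏_{k=0}^∞ (C β^k p₀)^{1/(β^k p₀)} · ‖g‖_{L^{p₀}}`, and the infinite
product converges. -/
theorem moser_iteration_explicit
    {X : Type*} [MeasurableSpace X] (μ : Measure X) [IsFiniteMeasure μ]
    (g : X → ℝ) (hg : Measurable g) (hpos : ∀ x, 0 ≤ g x)
    (hbd : ∃ M : ℝ, ∀ x, g x ≤ M)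
    (β p₀ C : ℝ) (hβ : 1 < β) (hp₀ : 0 < p₀) (hC : 1 ≤ C)
    (hiter : ∀ p : ℝ, p₀ ≤ p →
      (∫ x, g x ^ (p * β) ∂μ) ^ (1 / (p * β)) ≤
        C ^ (1 / p) * p ^ (1 / p) * (∫ x, g x ^ p ∂μ) ^ (1 / p)) :
    Multipliable (fun k : ℕ => (C * β ^ k * p₀) ^ (1 / (β ^ k * p₀))) ∧
    essSup g μ ≤ (∏' k : ℕ, (C * β ^ k * p₀) ^ (1 / (β ^ k * p₀))) *
      (∫ x, g x ^ p₀ ∂μ) ^ (1 / p₀) := by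
  obtain ⟨M, hM⟩ := hbd
  set M' : ℝ := max M 1 with hM'def
  have hM'1 : (1 : ℝ) ≤ M' := le_max_right _ _
  have hM' : ∀ x, g x ≤ M' := fun x => (hM x).trans (le_max_left _ _)
  have hβ0 : (0 : ℝ) < β := lt_trans one_pos hβ
  have hβk : ∀ k : ℕ, (0 : ℝ) < β ^ k := fun k => pow_pos hβ0 k
  have hβk1 : ∀ k : ℕ, (1 : ℝ) ≤ β ^ k := fun k => one_le_pow₀ hβ.le
  have hpk : ∀ k : ℕ, (0 : ℝ) < β ^ k * p₀ := fun k => mul_pos (hβk k) hp₀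
  have hC0 : (0 : ℝ) < C := lt_of_lt_of_le one_pos hC
  have hCp : ∀ k : ℕ, (0 : ℝ) < C * β ^ k * p₀ :=
    fun k => mul_pos (mul_pos hC0 (hβk k)) hp₀
  -- the log of the k-th factor
  set b : ℕ → ℝ := fun k => Real.log (C * β ^ k * p₀) / (β ^ k * p₀) with hbdef
  have ha : ∀ k : ℕ, (C * β ^ k * p₀) ^ (1 / (β ^ k * p₀)) = Real.exp (b k) := by
    intro k
    rw [Real.rpow_def_of_pos (hCp k), mul_one_div]
  -- summability of the logs
  have hrinv : ‖β⁻¹‖ < 1 := by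
    rw [Real.norm_eq_abs, abs_of_pos (inv_pos.mpr hβ0)]
    exact inv_lt_one_of_one_lt₀ hβ
  have hb : Summable b := by
    have s1 : Summable (fun k : ℕ => β⁻¹ ^ k) := summable_geometric_of_norm_lt_one hrinv
    have s2 : Summable (fun k : ℕ => (k : ℝ) ^ 1 * β⁻¹ ^ k) :=
      summable_pow_mul_geometric_of_norm_lt_one 1 hrinv
    refine ((s1.mul_left ((Real.log C + Real.log p₀) / p₀)).add
      (s2.mul_left (Real.log β / p₀))).congr fun k => ?_
    have hlog : Real.log (C * β ^ k * p₀) = Real.log C + (k : ℝ) * Real.log β + Real.log p₀ := by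
      rw [Real.log_mul (by positivity) (ne_of_gt hp₀),
        Real.log_mul (ne_of_gt hC0) (ne_of_gt (hβk k)), Real.log_pow]
    simp only [hbdef, hlog, pow_one, inv_pow]
    have h1 : (β ^ k : ℝ) ≠ 0 := ne_of_gt (hβk k)
    field_simp
    ring
  -- the product converges to exp of the sum
  have hprod : HasProd (fun k : ℕ => (C * β ^ k * p₀) ^ (1 / (β ^ k * p₀)))
      (Real.exp (∑' k, b k)) := by
    have := hb.hasSum.rexp
    have he : (fun k : ℕ => (C * β ^ k * p₀) ^ (1 / (β ^ k * p₀))) = rexp ∘ b :=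
      funext fun k => ha k
    rw [he]
    exact this
  refine ⟨hprod.multipliable, ?_⟩
  rw [hprod.tprod_eq]
  set A0 : ℝ := (∫ x, g x ^ p₀ ∂μ) ^ (1 / p₀) with hA0def
  have hA0 : 0 ≤ A0 :=
    Real.rpow_nonneg (integral_nonneg fun x => Real.rpow_nonneg (hpos x) _) _
  set L : ℝ := Real.exp (∑' k, b k) * A0 with hLdef
  have hL0 : 0 ≤ L := mul_nonneg (Real.exp_pos _).le hA0
  -- integrability of all powers
  have hint : ∀ p : ℝ, 0 < p → Integrable (fun x => g x ^ p) μ := by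
    intro p hp
    refine (integrable_const (M' ^ p)).mono'
      ((Real.continuous_rpow_const hp.le).measurable.comp hg).aestronglyMeasurable
      (Filter.Eventually.of_forall fun x => ?_)
    rw [Real.norm_eq_abs, abs_of_nonneg (Real.rpow_nonneg (hpos x) p)]
    exact Real.rpow_le_rpow (hpos x) (hM' x) hp.le
  -- the iteration
  have key : ∀ k : ℕ, (∫ x, g x ^ (β ^ k * p₀) ∂μ) ^ (1 / (β ^ k * p₀)) ≤
      Real.exp (∑ j ∈ Finset.range k, b j) * A0 := by
    intro k
    induction k with
    | zero => simp [hA0def]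
    | succ k ih =>
      have hmul : β ^ k * p₀ * β = β ^ (k + 1) * p₀ := by ring
      have h1 := hiter (β ^ k * p₀) (le_mul_of_one_le_left hp₀.le (hβk1 k))
      rw [hmul] at h1
      have h2 : C ^ (1 / (β ^ k * p₀)) * (β ^ k * p₀) ^ (1 / (β ^ k * p₀)) =
          Real.exp (b k) := by
        rw [← Real.mul_rpow hC0.le (hpk k).le,
          Real.rpow_def_of_pos (by rw [← mul_assoc]; exact hCp k), mul_one_div, ← mul_assoc]
      rw [h2] at h1
      have h3 : Real.exp (b k) * (∫ x, g x ^ (β ^ k * p₀) ∂μ) ^ (1 / (β ^ k * p₀)) ≤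
          Real.exp (b k) * (Real.exp (∑ j ∈ Finset.range k, b j) * A0) :=
        mul_le_mul_of_nonneg_left ih (Real.exp_pos _).le
      calc (∫ x, g x ^ (β ^ (k + 1) * p₀) ∂μ) ^ (1 / (β ^ (k + 1) * p₀))
          ≤ Real.exp (b k) * (Real.exp (∑ j ∈ Finset.range k, b j) * A0) :=
            h1.trans h3
        _ = Real.exp (∑ j ∈ Finset.range (k + 1), b j) * A0 := by
            rw [Finset.sum_range_succ, Real.exp_add, ← mul_assoc, mul_comm (rexp (b k))]
  -- choose K with β^K * p₀ ≥ 1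
  obtain ⟨K, hK⟩ : ∃ K : ℕ, 1 ≤ β ^ K * p₀ := by
    obtain ⟨K, hK⟩ := pow_unbounded_of_one_lt (1 / p₀) hβ
    exact ⟨K, by rw [div_lt_iff₀ hp₀] at hK; linarith⟩
  have hbnonneg : ∀ m : ℕ, K ≤ m → 0 ≤ b m := by
    intro m hm
    apply div_nonneg _ (hpk m).le
    apply Real.log_nonneg
    calc (1 : ℝ) ≤ β ^ K * p₀ := hK
      _ ≤ β ^ m * p₀ := by
          gcongr
          exact hβ.le
      _ ≤ C * β ^ m * p₀ := by
          rw [mul_assoc]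
          exact le_mul_of_one_le_left (hpk m).le hC
  have hfinal : ∀ k : ℕ, K ≤ k →
      (∫ x, g x ^ (β ^ k * p₀) ∂μ) ^ (1 / (β ^ k * p₀)) ≤ L := by
    intro k hk
    refine (key k).trans (mul_le_mul_of_nonneg_right ?_ hA0)
    rw [Real.exp_le_exp]
    have := Summable.sum_add_tsum_nat_add (f := b) k hb
    have htail : 0 ≤ ∑' j : ℕ, b (j + k) :=
      tsum_nonneg fun j => hbnonneg (j + k) (hk.trans (Nat.le_add_left k j))
    linarith
  -- the measure bound
  have claim : ∀ n : ℕ, μ {x | L + 1 / (n + 1) ≤ g x} = 0 := by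
    intro n
    by_contra hne
    set c : ℝ := L + 1 / (n + 1) with hcdef
    have hn1 : (0 : ℝ) < 1 / (n + 1) := by positivity
    have hc0 : 0 < c := by positivity
    set S : Set X := {x | c ≤ g x} with hSdef
    have hSmeas : MeasurableSet S := measurableSet_le measurable_const hg
    set m : ℝ := (μ S).toReal with hmdef
    have hm0 : 0 < m := ENNReal.toReal_pos hne (measure_ne_top μ S)
    -- for each k ≥ K : c * m^(1/pk) ≤ L
    have hstep : ∀ k : ℕ, K ≤ k → c * m ^ (1 / (β ^ k * p₀)) ≤ L := by
      intro k hk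
      set p : ℝ := β ^ k * p₀ with hpdef
      have hp : 0 < p := hpk k
      have h1 : c ^ p * m ≤ ∫ x, g x ^ p ∂μ := by
        have e1 : ∫ _ in S, c ^ p ∂μ = m * c ^ p := by
          rw [setIntegral_const, smul_eq_mul, measureReal_def]
        have e2 : ∫ x in S, c ^ p ∂μ ≤ ∫ x in S, g x ^ p ∂μ := by
          refine setIntegral_mono_on (integrableOn_const (measure_ne_top μ S))
            ((hint p hp).integrableOn) hSmeas fun x hx => ?_
          exact Real.rpow_le_rpow hc0.le hx hp.le
        have e3 : ∫ x in S, g x ^ p ∂μ ≤ ∫ x, g x ^ p ∂μ :=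
          setIntegral_le_integral (hint p hp)
            (Filter.Eventually.of_forall fun x => Real.rpow_nonneg (hpos x) p)
        calc c ^ p * m = ∫ _ in S, c ^ p ∂μ := by rw [e1, mul_comm]
          _ ≤ ∫ x, g x ^ p ∂μ := e2.trans e3
      have h2 : c * m ^ (1 / p) = (c ^ p * m) ^ (1 / p) := by
        rw [Real.mul_rpow (Real.rpow_nonneg hc0.le p) hm0.le,
          ← Real.rpow_mul hc0.le, mul_one_div_cancel (ne_of_gt hp), Real.rpow_one]
      rw [h2]
      calc (c ^ p * m) ^ (1 / p) ≤ (∫ x, g x ^ p ∂μ) ^ (1 / p) :=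
            Real.rpow_le_rpow (mul_nonneg (Real.rpow_nonneg hc0.le p) hm0.le) h1
              (by positivity)
        _ ≤ L := hfinal k hk
    -- take the limit k → ∞
    have t0 : Filter.Tendsto (fun k : ℕ => β ^ k * p₀) Filter.atTop Filter.atTop :=
      (tendsto_pow_atTop_atTop_of_one_lt hβ).atTop_mul_const hp₀
    have t1 : Filter.Tendsto (fun k : ℕ => 1 / (β ^ k * p₀)) Filter.atTop (nhds 0) := by
      simp only [one_div]
      exact t0.inv_tendsto_atTop
    have t2 : Filter.Tendsto (fun k : ℕ => c * m ^ (1 / (β ^ k * p₀)))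
        Filter.atTop (nhds c) := by
      have e : ∀ k : ℕ, c * m ^ (1 / (β ^ k * p₀)) =
          c * Real.exp (Real.log m * (1 / (β ^ k * p₀))) := by
        intro k
        rw [Real.rpow_def_of_pos hm0]
      simp only [e]
      have : Filter.Tendsto (fun k : ℕ => Real.log m * (1 / (β ^ k * p₀)))
          Filter.atTop (nhds 0) := by
        simpa using t1.const_mul (Real.log m)
      have := (Real.continuous_exp.tendsto 0).comp this
      simpa using this.const_mul c
    have hcL : c ≤ L := by
      refine le_of_tendsto t2 ?_
      filter_upwards [Filter.eventually_ge_atTop K] with k hk using hstep k hk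
    rw [hcdef] at hcL
    linarith
  have hnull : μ {x | L < g x} = 0 := by
    refine measure_mono_null ?_ (measure_iUnion_null fun n : ℕ => claim n)
    intro x hx
    obtain ⟨n, hn⟩ := exists_nat_one_div_lt (K := ℝ) (sub_pos.mpr hx)
    exact Set.mem_iUnion.mpr ⟨n, by simp only [Set.mem_setOf_eq]; linarith⟩
  -- conclude via essSup
  by_cases hμ : μ = 0
  · subst hμ
    have : essSup g (0 : Measure X) = 0 := by
      rw [essSup_eq_sInf]
      have : {a : ℝ | (0 : Measure X) {x | a < g x} = 0} = Set.univ := by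
        ext a; simp
      rw [this]
      exact Real.sInf_of_not_bddBelow not_bddBelow_univ
    rw [this]
    exact hL0
  · rw [essSup_eq_sInf]
    refine csInf_le ⟨0, fun a hamem => ?_⟩ hnull
    by_contra hlt
    push_neg at hlt
    have : {x | a < g x} = Set.univ :=
      Set.eq_univ_of_forall fun x => lt_of_lt_of_le hlt (hpos x)
    simp only [Set.mem_setOf_eq] at hamem
    rw [this] at hamem
    exact hμ (Measure.measure_univ_eq_zero.mp hamem)
end

section
/- Let μ be a probability measure on a space X and let φ : X → ℝ be a bounded measurable function with essential sup φ = 0. Suppose for some p₀ > 0 and C ≥ 0 that exp(-p₀ · inf φ) ≤ C ∫ exp(-p₀ φ) dμ. Then there exist constants C' ≥ 0 and δ > 0, depending only on p₀ and C, such that μ({φ ≤ inf φ + C'}) ≥ δ. -/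
open MeasureTheory Real

/-- From the exponential integral bound `exp(-p₀·essInf φ) ≤ C ∫ exp(-p₀ φ) dμ` on a
probability space one obtains, with constants depending only on `p₀` and `C`, a lower
bound on the measure of a sublevel set near the minimum. -/
theorem sublevel_bound_from_exponential
    (p₀ C : ℝ) (hp₀ : 0 < p₀) (hC : 0 ≤ C) :
    ∃ C' δ : ℝ, 0 ≤ C' ∧ 0 < δ ∧
      ∀ (X : Type) (_ : MeasurableSpace X) (μ : Measure X),
        IsProbabilityMeasure μ →
        ∀ φ : X → ℝ, Measurable φ → (∃ M : ℝ, ∀ x, |φ x| ≤ M) →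
        essSup φ μ = 0 →
        Real.exp (-(p₀ * essInf φ μ)) ≤ C * ∫ x, Real.exp (-(p₀ * φ x)) ∂μ →
        ENNReal.ofReal δ ≤ μ {x | φ x ≤ essInf φ μ + C'} := by
  have h2C : (0:ℝ) < 2 * C + 2 := by linarith
  refine ⟨Real.log (2 * C + 2) / p₀, 1 / (2 * C + 2),
    div_nonneg (Real.log_nonneg (by linarith)) hp₀.le, by positivity, ?_⟩
  intro X mX μ hμ φ hφ ⟨M, hM⟩ _hsup hint
  set C' : ℝ := Real.log (2 * C + 2) / p₀ with hC'
  set m : ℝ := essInf φ μ with hm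
  set A : Set X := {x | φ x ≤ m + C'} with hA
  have hAmeas : MeasurableSet A := measurableSet_le hφ measurable_const
  -- a.e. lower bound by essInf
  have hbdd : Filter.IsBoundedUnder (· ≥ ·) (ae μ) φ :=
    ⟨-M, Filter.eventually_map.2 (Filter.Eventually.of_forall fun x => (abs_le.mp (hM x)).1)⟩
  have hae : ∀ᵐ x ∂μ, m ≤ φ x := ae_essInf_le hbdd
  -- integrability
  set g : X → ℝ := fun x => Real.exp (-(p₀ * φ x)) with hg
  have hgmeas : Measurable g := (hφ.const_mul p₀).neg.exp
  have hgint : Integrable g μ := by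
    refine Integrable.mono' (integrable_const (Real.exp (p₀ * M))) hgmeas.aestronglyMeasurable
      (Filter.Eventually.of_forall fun x => ?_)
    rw [Real.norm_eq_abs, abs_of_pos (Real.exp_pos _)]
    apply Real.exp_le_exp.2
    have := (abs_le.mp (hM x)).1
    nlinarith
  -- split the integral
  have hsplit : (∫ x, g x ∂μ) = (∫ x in A, g x ∂μ) + ∫ x in Aᶜ, g x ∂μ :=
    (integral_add_compl hAmeas hgint).symm
  set a : ℝ := (μ A).toReal with ha
  have ha1 : a ≤ 1 := by
    rw [ha]
    exact ENNReal.toReal_le_of_le_ofReal one_pos.le (by simpa using prob_le_one)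
  have ha0 : 0 ≤ a := ENNReal.toReal_nonneg
  -- bound on A
  have hIA : (∫ x in A, g x ∂μ) ≤ a * Real.exp (-(p₀ * m)) := by
    have hb : ∀ᵐ x ∂μ.restrict A, g x ≤ Real.exp (-(p₀ * m)) := by
      refine ae_restrict_of_ae (hae.mono fun x hx => ?_)
      exact Real.exp_le_exp.2 (by nlinarith)
    calc (∫ x in A, g x ∂μ) ≤ ∫ _ in A, Real.exp (-(p₀ * m)) ∂μ :=
          integral_mono_ae hgint.restrict (integrable_const _) hb
      _ = a * Real.exp (-(p₀ * m)) := by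
          rw [integral_const, measureReal_restrict_apply_univ, measureReal_def, smul_eq_mul]
  -- bound on Aᶜ
  have hIAc : (∫ x in Aᶜ, g x ∂μ) ≤ Real.exp (-(p₀ * (m + C'))) := by
    have hb : ∀ᵐ x ∂μ.restrict Aᶜ, g x ≤ Real.exp (-(p₀ * (m + C'))) := by
      refine (ae_restrict_iff' hAmeas.compl).2 (Filter.Eventually.of_forall fun x hx => ?_)
      have : m + C' < φ x := lt_of_not_ge hx
      exact Real.exp_le_exp.2 (by nlinarith)
    calc (∫ x in Aᶜ, g x ∂μ) ≤ ∫ _ in Aᶜ, Real.exp (-(p₀ * (m + C'))) ∂μ :=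
          integral_mono_ae hgint.restrict (integrable_const _) hb
      _ = (μ Aᶜ).toReal * Real.exp (-(p₀ * (m + C'))) := by
          rw [integral_const, measureReal_restrict_apply_univ, measureReal_def, smul_eq_mul]
      _ ≤ 1 * Real.exp (-(p₀ * (m + C'))) := by
          apply mul_le_mul_of_nonneg_right _ (Real.exp_pos _).le
          exact ENNReal.toReal_le_of_le_ofReal one_pos.le (by simpa using prob_le_one)
      _ = Real.exp (-(p₀ * (m + C'))) := one_mul _
  -- key identity
  have hexpC' : Real.exp (-(p₀ * C')) = 1 / (2 * C + 2) := by
    rw [hC', mul_div_cancel₀ _ hp₀.ne', Real.exp_neg, Real.exp_log h2C, one_div]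
  have hsplitexp : Real.exp (-(p₀ * (m + C')))
      = Real.exp (-(p₀ * m)) * (1 / (2 * C + 2)) := by
    rw [← hexpC', ← Real.exp_add]; ring_nf
  set E : ℝ := Real.exp (-(p₀ * m)) with hE
  have hEpos : 0 < E := Real.exp_pos _
  have hkey : E ≤ C * (a * E + E * (1 / (2 * C + 2))) := by
    calc E ≤ C * ∫ x, g x ∂μ := hint
      _ = C * ((∫ x in A, g x ∂μ) + ∫ x in Aᶜ, g x ∂μ) := by rw [hsplit]
      _ ≤ C * (a * E + E * (1 / (2 * C + 2))) := by
          apply mul_le_mul_of_nonneg_left _ hC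
          exact add_le_add hIA (hsplitexp ▸ hIAc)
  have hone : 1 ≤ C * (a + 1 / (2 * C + 2)) := by
    have := hkey
    rw [show C * (a * E + E * (1 / (2 * C + 2))) = C * (a + 1 / (2 * C + 2)) * E by ring] at this
    exact le_of_mul_le_mul_right (by linarith [one_mul E]) hEpos
  have hfin : 1 / (2 * C + 2) ≤ a := by
    by_contra h
    push_neg at h
    have h1 : C * (a + 1 / (2 * C + 2)) ≤ C * (2 * (1 / (2 * C + 2))) := by
      apply mul_le_mul_of_nonneg_left (by linarith) hC
    have h2 : C * (2 * (1 / (2 * C + 2))) < 1 := by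
      rw [show C * (2 * (1 / (2 * C + 2))) = (2 * C) / (2 * C + 2) by ring,
        div_lt_one h2C]
      linarith
    linarith
  refine ENNReal.ofReal_le_of_le_toReal ?_
  exact hfin
end
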